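/- Let (R,m) be a Noetherian local ring of characteristic p > 0, and I an m-primary ideal of R. Then for every n, length(R/I^{[p^n]}) ≤ length(R/I) · length(R/m^{[p^n]}). -/

import Mathlib

open IsLocalRing Filter Topology
open scoped TensorProduct

/-- `bracketPow R I q` is the ideal `I^{[q]}` generated by the `q`-th powers of elements of `I`. -/
def bracketPow (R : Type) [CommRing R] (I : Ideal R) (q : ℕ) : Ideal R :=
  Ideal.span ((fun r => r ^ q) '' (I : Set R))
/-- The length of an `R`-module `M`: the supremum of lengths of strictly
increasing chains of submodules of `M`. -/
noncomputable def moduleLength (R M : Type) [CommRing R] [AddCommGroup M] [Module R M] : ℕ∞ :=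
  ⨆ s : RelSeries {(x, y) : Submodule R M × Submodule R M | x < y}, (s.length : ℕ∞)

/-! ### Auxiliary order-theoretic lemmas -/

/-- The supremum of lengths of `LTSeries` in a preorder. -/
noncomputable def supLen (α : Type*) [Preorder α] : ℕ∞ :=
  ⨆ s : LTSeries α, (s.length : ℕ∞)

lemma moduleLength_def (R M : Type) [CommRing R] [AddCommGroup M] [Module R M] :
    moduleLength R M = supLen (Submodule R M) := rfl

lemma height_add_one_le' {α : Type*} [Preorder α] {a b : α} (h : a < b) :
    Order.height a + 1 ≤ Order.height b := by
  rcases eq_or_ne (Order.height a) ⊤ with ht | ht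
  · have hb : Order.height b = ⊤ := top_le_iff.mp (ht ▸ Order.height_mono h.le)
    simp [ht, hb]
  · rw [ENat.add_one_le_iff ht]
    exact Order.height_strictMono h (lt_top_iff_ne_top.mpr ht)

lemma height_le_supLen {α : Type*} [Preorder α] (a : α) : Order.height a ≤ supLen α :=
  Order.height_le fun p _ => le_iSup (fun s : LTSeries α => (s.length : ℕ∞)) p

lemma supLen_le_of_strictMono {α β : Type*} [Preorder α] [Preorder β] (f : α → β)
    (hf : StrictMono f) : supLen α ≤ supLen β :=
  iSup_le fun s => le_iSup_of_le (s.map f hf) (by simp [LTSeries.map])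

/-- In a modular lattice, the length of a chain is bounded by the sum of heights of the
images of its last element in the intervals above and below `b`. -/
lemma length_le_height_sup_add_height_inf {α : Type*} [Lattice α] [IsModularLattice α] (b : α) :
    ∀ (n : ℕ) (s : LTSeries α), s.length = n →
      (n : ℕ∞) ≤ Order.height (⟨s.last ⊔ b, le_sup_right⟩ : {x : α // b ≤ x})
        + Order.height (⟨s.last ⊓ b, inf_le_right⟩ : {x : α // x ≤ b}) := by
  intro n
  induction n with
  | zero => intro s _; simp
  | succ n ih =>
    intro s hs
    have hlen : s.length ≠ 0 := by omega
    have hlt : s.eraseLast.last < s.last := s.eraseLast_last_rel_last hlen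
    have h1 : s.eraseLast.length = n := by simp [hs]
    have IH := ih s.eraseLast h1
    set e := s.eraseLast.last with he
    have hsup : e ⊔ b ≤ s.last ⊔ b := sup_le_sup_right hlt.le b
    have hinf : e ⊓ b ≤ s.last ⊓ b := inf_le_inf_right b hlt.le
    have key : e ⊔ b < s.last ⊔ b ∨ e ⊓ b < s.last ⊓ b := by
      rcases hsup.lt_or_eq with h | h
      · exact Or.inl h
      rcases hinf.lt_or_eq with h' | h'
      · exact Or.inr h'
      exfalso
      have : e = s.last := by
        have h2 : e ⊔ (b ⊓ s.last) = (e ⊔ b) ⊓ s.last :=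
          (sup_inf_assoc_of_le b hlt.le).symm
        calc e = e ⊔ (e ⊓ b) := (sup_inf_self).symm
          _ = e ⊔ (s.last ⊓ b) := by rw [h']
          _ = e ⊔ (b ⊓ s.last) := by rw [inf_comm]
          _ = (e ⊔ b) ⊓ s.last := h2
          _ = (s.last ⊔ b) ⊓ s.last := by rw [h]
          _ = s.last := by rw [inf_comm, inf_sup_self]
      exact hlt.ne this
    have harith : ∀ A B A' B' : ℕ∞, (n : ℕ∞) ≤ A + B → A + 1 ≤ A' → B ≤ B' →
        ((n + 1 : ℕ) : ℕ∞) ≤ A' + B' := by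
      intro A B A' B' h1 h2 h3
      push_cast
      calc (n : ℕ∞) + 1 ≤ (A + B) + 1 := add_le_add_left h1 1
        _ = (A + 1) + B := by ring
        _ ≤ A' + B' := add_le_add h2 h3
    rcases key with h | h
    · exact harith _ _ _ _ IH
        (height_add_one_le' (a := (⟨e ⊔ b, le_sup_right⟩ : {x : α // b ≤ x}))
          (b := ⟨s.last ⊔ b, le_sup_right⟩) (Subtype.mk_lt_mk.mpr h))
        (Order.height_mono (Subtype.mk_le_mk.mpr hinf))
    · rw [show ((n + 1 : ℕ) : ℕ∞) = (n : ℕ∞) + 1 by push_cast; ring]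
      calc (n : ℕ∞) + 1
          ≤ (Order.height (⟨e ⊔ b, le_sup_right⟩ : {x : α // b ≤ x})
            + Order.height (⟨e ⊓ b, inf_le_right⟩ : {x : α // x ≤ b})) + 1 :=
            add_le_add_left IH 1
        _ = Order.height (⟨e ⊔ b, le_sup_right⟩ : {x : α // b ≤ x})
            + (Order.height (⟨e ⊓ b, inf_le_right⟩ : {x : α // x ≤ b}) + 1) := by ring
        _ ≤ _ := add_le_add (Order.height_mono (Subtype.mk_le_mk.mpr hsup))
            (height_add_one_le' (Subtype.mk_lt_mk.mpr h))

lemma supLen_le_subtypes {α : Type*} [Lattice α] [IsModularLattice α] (b : α) :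
    supLen α ≤ supLen {x : α // b ≤ x} + supLen {x : α // x ≤ b} :=
  iSup_le fun s => le_trans (length_le_height_sup_add_height_inf b s.length s rfl)
    (add_le_add (height_le_supLen _) (height_le_supLen _))

/-! ### Module-theoretic length lemmas -/

section ModuleLemmas

variable {R M M₂ : Type} [CommRing R] [AddCommGroup M] [Module R M]
  [AddCommGroup M₂] [Module R M₂]

lemma moduleLength_le_of_surjective (f : M →ₗ[R] M₂) (hf : Function.Surjective f) :
    moduleLength R M₂ ≤ moduleLength R M := by
  rw [moduleLength_def, moduleLength_def]
  refine supLen_le_of_strictMono (Submodule.comap f) ?_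
  exact Monotone.strictMono_of_injective (fun p q h => Submodule.comap_mono h)
    (Submodule.comap_injective_of_surjective hf)

lemma moduleLength_congr (e : M ≃ₗ[R] M₂) : moduleLength R M = moduleLength R M₂ :=
  le_antisymm (moduleLength_le_of_surjective (e.symm : M₂ →ₗ[R] M) e.symm.surjective)
    (moduleLength_le_of_surjective (e : M →ₗ[R] M₂) e.surjective)

lemma moduleLength_le_quotient_add (N : Submodule R M) :
    moduleLength R M ≤ moduleLength R (M ⧸ N) + moduleLength R N := by
  rw [moduleLength_def, moduleLength_def, moduleLength_def]
  refine le_trans (supLen_le_subtypes N) (add_le_add ?_ ?_)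
  · exact supLen_le_of_strictMono (fun x => (Submodule.comapMkQRelIso N).symm x)
      (Submodule.comapMkQRelIso N).symm.strictMono
  · exact supLen_le_of_strictMono (fun x => (Submodule.MapSubtype.orderIso N).symm x)
      (Submodule.MapSubtype.orderIso N).symm.strictMono

lemma moduleLength_eq_zero_of_subsingleton [Subsingleton M] : moduleLength R M = 0 := by
  rw [moduleLength_def, supLen]
  refine le_antisymm (iSup_le fun s => ?_) zero_le
  have : s.length = 0 := by
    by_contra h
    have := s.step ⟨0, Nat.pos_of_ne_zero h⟩
    have heq : s (Fin.castSucc ⟨0, Nat.pos_of_ne_zero h⟩) = s (Fin.succ ⟨0, Nat.pos_of_ne_zero h⟩) :=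
      Subsingleton.elim _ _
    exact absurd heq this.ne
  simp [this]

lemma one_le_moduleLength [Nontrivial M] : 1 ≤ moduleLength R M := by
  rw [moduleLength_def]
  obtain ⟨x, hx⟩ := exists_ne (0 : M)
  have hbot : (⊥ : Submodule R M) < ⊤ := by
    refine lt_of_le_of_ne bot_le fun h => hx ?_
    have : x ∈ (⊥ : Submodule R M) := h ▸ Submodule.mem_top
    simpa using this
  let t : LTSeries (Submodule R M) := RelSeries.singleton _ (⊤ : Submodule R M)
  have hhead : (⊥ : Submodule R M) < t.head := hbot
  refine le_iSup_of_le (t.cons ⊥ hhead) ?_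
  simp [RelSeries.cons_length, t]

end ModuleLemmas

section Main

variable {R : Type} [CommRing R]

lemma step_moduleLength {A B : Ideal R} (h : A < B) :
    moduleLength R (R ⧸ B) + 1 ≤ moduleLength R (R ⧸ A) := by
  have hAleB : A ≤ B := h.le
  set g : Submodule R (R ⧸ B) → Submodule R (R ⧸ A) :=
    fun p => Submodule.map A.mkQ (Submodule.comap B.mkQ p) with hg_def
  have hcomap : ∀ p : Submodule R (R ⧸ B),
      Submodule.comap A.mkQ (g p) = Submodule.comap B.mkQ p := by
    intro p
    rw [hg_def]
    rw [Submodule.comap_map_mkQ]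
    refine sup_eq_right.mpr (le_trans hAleB ?_)
    intro y hy
    show B.mkQ y ∈ p
    have hy0 : B.mkQ y = 0 := by
      rw [Submodule.mkQ_apply, Submodule.Quotient.mk_eq_zero]; exact hy
    rw [hy0]; exact p.zero_mem
  have hg : StrictMono g := by
    refine Monotone.strictMono_of_injective
      (fun p q hpq => Submodule.map_mono (Submodule.comap_mono hpq)) ?_
    intro p q hpq
    have := congrArg (Submodule.comap A.mkQ) hpq
    rw [hcomap, hcomap] at this
    exact Submodule.comap_injective_of_surjective (Submodule.mkQ_surjective B) this
  obtain ⟨y, hyB, hyA⟩ := SetLike.exists_of_lt h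
  rw [moduleLength_def, moduleLength_def, supLen, ENat.iSup_add]
  refine iSup_le fun s => ?_
  have hhead : (⊥ : Submodule R (R ⧸ A)) < (s.map g hg).head := by
    rw [LTSeries.head_map]
    refine lt_of_le_of_ne bot_le fun hbot => ?_
    have hmem : A.mkQ y ∈ g s.head := by
      refine Submodule.mem_map_of_mem ?_
      show B.mkQ y ∈ s.head
      have : B.mkQ y = 0 := by
        rw [Submodule.mkQ_apply, Submodule.Quotient.mk_eq_zero]; exact hyB
      rw [this]; exact Submodule.zero_mem _
    rw [← hbot] at hmem
    rw [Submodule.mem_bot, Submodule.mkQ_apply, Submodule.Quotient.mk_eq_zero] at hmem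
    exact hyA hmem
  have := le_iSup (fun t : LTSeries (Submodule R (R ⧸ A)) => (t.length : ℕ∞))
    ((s.map g hg).cons ⊥ hhead)
  refine le_trans ?_ this
  have hlen : ((s.map g hg).cons ⊥ hhead).length = s.length + 1 := by
    simp [RelSeries.cons_length]
  rw [hlen]
  push_cast
  exact le_refl _

lemma isArtinian_of_moduleLength_ne_top {M : Type} [AddCommGroup M] [Module R M]
    (h : moduleLength R M ≠ ⊤) : IsArtinian R M := by
  rw [isArtinian_iff]
  by_contra hwf
  rw [RelEmbedding.wellFounded_iff_isEmpty, not_isEmpty_iff] at hwf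
  obtain ⟨f⟩ := hwf
  apply h
  have hle : ∀ k : ℕ, (k : ℕ∞) ≤ moduleLength R M := by
    intro k
    let s : LTSeries (Submodule R M) :=
      ⟨k, fun i => f (k - (i : ℕ)), fun i => by
        refine f.map_rel_iff.mpr ?_
        show (k - ((i.succ : Fin (k+1)) : ℕ)) < (k - ((i.castSucc : Fin (k+1)) : ℕ))
        have hi : (i : ℕ) < k := i.2
        simp only [Fin.val_succ, Fin.coe_castSucc]
        omega⟩
    have := le_iSup (fun t : LTSeries (Submodule R M) => (t.length : ℕ∞)) s
    simpa [s, moduleLength_def, supLen] using this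
  rcases eq_or_ne (moduleLength R M) ⊤ with h' | h'
  · exact h'
  · exfalso
    lift moduleLength R M to ℕ using h' with m hm
    have := hle (m + 1)
    rw [Nat.cast_le] at this
    omega

lemma bracketPow_mono {I J : Ideal R} (h : I ≤ J) (q : ℕ) :
    bracketPow R I q ≤ bracketPow R J q :=
  Ideal.span_mono (Set.image_mono h)

lemma pow_mem_bracketPow {I : Ideal R} {x : R} (hx : x ∈ I) (q : ℕ) :
    x ^ q ∈ bracketPow R I q :=
  Ideal.subset_span ⟨x, hx, rfl⟩

lemma bracketPow_sup_span (p : ℕ) [hp : Fact p.Prime] [CharP R p] (n : ℕ)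
    (J : Ideal R) (x : R) :
    bracketPow R (J ⊔ Ideal.span {x}) (p ^ n) =
      bracketPow R J (p ^ n) ⊔ Ideal.span {x ^ p ^ n} := by
  apply le_antisymm
  · rw [bracketPow, Ideal.span_le]
    rintro _ ⟨y, hy, rfl⟩
    obtain ⟨j, hj, w, hw, rfl⟩ := Submodule.mem_sup.mp hy
    obtain ⟨c, rfl⟩ := Ideal.mem_span_singleton'.mp hw
    show (j + c * x) ^ p ^ n ∈ _
    rw [add_pow_char_pow, mul_pow]
    exact Submodule.add_mem_sup (pow_mem_bracketPow hj _)
      (Ideal.mem_span_singleton'.mpr ⟨c ^ p ^ n, rfl⟩)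
  · refine sup_le (bracketPow_mono le_sup_left _) ?_
    rw [Ideal.span_le, Set.singleton_subset_iff]
    exact pow_mem_bracketPow (le_sup_right (α := Ideal R)
      (Ideal.subset_span (Set.mem_singleton x))) _

/-- The key subadditivity step. -/
lemma moduleLength_le_of_sup_span (A B : Ideal R) (hAB : A ≤ B) (z : R)
    (hz : B = A ⊔ Ideal.span {z}) (C : Ideal R) (hC : ∀ c ∈ C, c * z ∈ A) :
    moduleLength R (R ⧸ A) ≤ moduleLength R (R ⧸ B) + moduleLength R (R ⧸ C) := by
  set N : Submodule R (R ⧸ A) := Submodule.map A.mkQ B with hN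
  have step1 : moduleLength R (R ⧸ A) ≤ moduleLength R ((R ⧸ A) ⧸ N) + moduleLength R N :=
    moduleLength_le_quotient_add N
  have step2 : moduleLength R ((R ⧸ A) ⧸ N) = moduleLength R (R ⧸ B) :=
    moduleLength_congr (Submodule.quotientQuotientEquivQuotient A B hAB)
  have hNspan : N = Submodule.span R {A.mkQ z} := by
    rw [hN, hz, Submodule.map_sup]
    have h1 : Submodule.map A.mkQ A = ⊥ := by
      refine le_antisymm ?_ bot_le
      rw [Submodule.map_le_iff_le_comap, Submodule.comap_bot, Submodule.ker_mkQ]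
    have h2 : Submodule.map A.mkQ (Ideal.span {z}) = Submodule.span R {A.mkQ z} := by
      rw [Ideal.span, Submodule.map_span, Set.image_singleton]
    rw [h1, h2, bot_sup_eq]
  have step3 : moduleLength R N ≤ moduleLength R (R ⧸ C) := by
    set φ : R →ₗ[R] R ⧸ A := LinearMap.toSpanSingleton R (R ⧸ A) (A.mkQ z) with hφ
    have hφmem : ∀ r : R, φ r ∈ N := by
      intro r
      rw [hNspan, hφ]
      exact Submodule.smul_mem _ r (Submodule.mem_span_singleton_self _)
    set ψ : R →ₗ[R] N := φ.codRestrict N hφmem with hψ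
    have hker : C ≤ LinearMap.ker ψ := by
      intro c hc
      rw [LinearMap.mem_ker]
      apply Subtype.ext
      show φ c = 0
      rw [hφ]
      show c • A.mkQ z = 0
      rw [← map_smul, smul_eq_mul, Submodule.mkQ_apply, Submodule.Quotient.mk_eq_zero]
      exact hC c hc
    set χ : R ⧸ C →ₗ[R] N := C.liftQ ψ hker with hχ
    have hsurj : Function.Surjective χ := by
      rintro ⟨w, hw⟩
      rw [hNspan] at hw
      obtain ⟨r, hr⟩ := Submodule.mem_span_singleton.mp hw
      refine ⟨C.mkQ r, ?_⟩
      apply Subtype.ext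
      show φ r = w
      rw [hφ]
      exact hr
    exact moduleLength_le_of_surjective χ hsurj
  calc moduleLength R (R ⧸ A) ≤ moduleLength R ((R ⧸ A) ⧸ N) + moduleLength R N := step1
    _ = moduleLength R (R ⧸ B) + moduleLength R N := by rw [step2]
    _ ≤ moduleLength R (R ⧸ B) + moduleLength R (R ⧸ C) := add_le_add_right step3 _

variable [IsNoetherianRing R] [IsLocalRing R]

/-- Existence of a "socle" element above a proper ideal of finite colength. -/
lemma exists_socle_element {J : Ideal R} (hJtop : J ≠ ⊤)
    (hfin : moduleLength R (R ⧸ J) ≠ ⊤) :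
    ∃ x : R, x ∉ J ∧ ∀ c ∈ maximalIdeal R, c * x ∈ J := by
  have hart : IsArtinian R (R ⧸ J) := isArtinian_of_moduleLength_ne_top hfin
  have hatomic : IsAtomic (Submodule R (R ⧸ J)) :=
    isAtomic_of_orderBot_wellFounded_lt (IsWellFounded.wf)
  have hnt : Nontrivial (R ⧸ J) :=
    Submodule.Quotient.nontrivial_iff.mpr hJtop
  have htop : (⊤ : Submodule R (R ⧸ J)) ≠ ⊥ := by
    obtain ⟨u, hu⟩ := exists_ne (0 : R ⧸ J)
    intro h
    have hmem : u ∈ (⊥ : Submodule R (R ⧸ J)) := h ▸ Submodule.mem_top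
    exact hu (by simpa using hmem)
  obtain ⟨a, ha, -⟩ := (hatomic.eq_bot_or_exists_atom_le ⊤).resolve_left htop
  haveI hsimple : IsSimpleModule R a := isSimpleModule_iff_isAtom.mpr ha
  have hann : Module.annihilator R a = maximalIdeal R :=
    IsLocalRing.eq_maximalIdeal hsimple.annihilator_isMaximal
  obtain ⟨z, hza, hz0⟩ := Submodule.ne_bot_iff a |>.mp ha.1
  obtain ⟨x, rfl⟩ := Submodule.Quotient.mk_surjective J z
  refine ⟨x, ?_, ?_⟩
  · intro hxJ
    exact hz0 (by rwa [Submodule.Quotient.mk_eq_zero])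
  · intro c hc
    have : c ∈ Module.annihilator R a := hann ▸ hc
    have hkill := Module.mem_annihilator.mp this ⟨Submodule.Quotient.mk x, hza⟩
    have : c • (Submodule.Quotient.mk x : R ⧸ J) = 0 := by
      simpa using congrArg Subtype.val hkill
    rwa [← Submodule.Quotient.mk_smul, smul_eq_mul, Submodule.Quotient.mk_eq_zero] at this

lemma key_induction (p : ℕ) (hp : p.Prime) [CharP R p] (n : ℕ) :
    ∀ (c : ℕ) (J : Ideal R), moduleLength R (R ⧸ J) ≤ (c : ℕ∞) →
      moduleLength R (R ⧸ bracketPow R J (p ^ n)) ≤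
        (c : ℕ∞) * moduleLength R (R ⧸ bracketPow R (maximalIdeal R) (p ^ n)) := by
  haveI : Fact p.Prime := ⟨hp⟩
  intro c
  induction c with
  | zero =>
    intro J hJ
    have hJtop : J = ⊤ := by
      by_contra hne
      have hnt : Nontrivial (R ⧸ J) :=
        Submodule.Quotient.nontrivial_iff.mpr hne
      have h1 := one_le_moduleLength (R := R) (M := R ⧸ J)
      have := le_trans h1 hJ
      simp at this
    have hbtop : bracketPow R J (p ^ n) = ⊤ := by
      rw [Ideal.eq_top_iff_one]
      have : (1 : R) ^ p ^ n ∈ bracketPow R J (p ^ n) :=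
        pow_mem_bracketPow (hJtop ▸ Submodule.mem_top) _
      simpa using this
    have hsub : Subsingleton (R ⧸ bracketPow R J (p ^ n)) :=
      Submodule.Quotient.subsingleton_iff.mpr hbtop
    rw [moduleLength_eq_zero_of_subsingleton]
    simp
  | succ c ih =>
    intro J hJ
    by_cases hJtop : J = ⊤
    · have hbtop : bracketPow R J (p ^ n) = ⊤ := by
        rw [Ideal.eq_top_iff_one]
        have : (1 : R) ^ p ^ n ∈ bracketPow R J (p ^ n) :=
          pow_mem_bracketPow (hJtop ▸ Submodule.mem_top) _
        simpa using this
      have hsub : Subsingleton (R ⧸ bracketPow R J (p ^ n)) :=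
        Submodule.Quotient.subsingleton_iff.mpr hbtop
      rw [moduleLength_eq_zero_of_subsingleton]
      exact zero_le
    · have hfin : moduleLength R (R ⧸ J) ≠ ⊤ := by
        intro h
        rw [h] at hJ
        exact absurd (top_le_iff.mp hJ) (ENat.coe_ne_top _)
      obtain ⟨x, hxJ, hmx⟩ := exists_socle_element hJtop hfin
      set J' : Ideal R := J ⊔ Ideal.span {x} with hJ'def
      have hlt : J < J' := by
        refine lt_of_le_of_ne le_sup_left fun hEq => hxJ ?_
        rw [hEq, hJ'def]
        exact le_sup_right (α := Ideal R) (Ideal.subset_span (Set.mem_singleton x))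
      have hJ'len : moduleLength R (R ⧸ J') ≤ (c : ℕ∞) := by
        have h2 := step_moduleLength hlt
        have h3 : moduleLength R (R ⧸ J') + 1 ≤ (c : ℕ∞) + 1 := by
          refine le_trans h2 (le_trans hJ ?_)
          push_cast
          exact le_refl _
        exact (WithTop.add_le_add_iff_right (by simp : (1 : ℕ∞) ≠ ⊤)).mp h3
      have IH := ih J' hJ'len
      set q : ℕ := p ^ n with hq
      set A : Ideal R := bracketPow R J q with hA
      set B : Ideal R := bracketPow R J' q with hB
      set C : Ideal R := bracketPow R (maximalIdeal R) q with hC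
      have hAB : A ≤ B := bracketPow_mono le_sup_left _
      have hBeq : B = A ⊔ Ideal.span {x ^ q} := bracketPow_sup_span p n J x
      have hCz : ∀ c' ∈ C, c' * x ^ q ∈ A := by
        have hle : C ≤ Submodule.comap (LinearMap.toSpanSingleton R R (x ^ q)) A := by
          rw [hC, bracketPow, Ideal.span_le]
          rintro _ ⟨m, hm, rfl⟩
          show m ^ q • x ^ q ∈ A
          rw [smul_eq_mul, ← mul_pow]
          exact pow_mem_bracketPow (hmx m hm) _
        intro c' hc'
        have := hle hc'
        simpa using this
      calc moduleLength R (R ⧸ A)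
          ≤ moduleLength R (R ⧸ B) + moduleLength R (R ⧸ C) :=
            moduleLength_le_of_sup_span A B hAB (x ^ q) hBeq C hCz
        _ ≤ (c : ℕ∞) * moduleLength R (R ⧸ C) + moduleLength R (R ⧸ C) :=
            add_le_add_left IH _
        _ = ((c + 1 : ℕ) : ℕ∞) * moduleLength R (R ⧸ C) := by
            push_cast
            rw [add_one_mul]

end Main

/-- `length(R/I^{[q]}) ≤ length(R/I) · length(R/m^{[q]})` for `q = pⁿ`. -/
theorem stmt4 (R : Type) [CommRing R] [IsNoetherianRing R] [IsLocalRing R]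
    (p : ℕ) (hp : p.Prime) [CharP R p]
    (I : Ideal R) (hI : I.radical = maximalIdeal R) (n : ℕ) :
    moduleLength R (R ⧸ bracketPow R I (p ^ n)) ≤
      moduleLength R (R ⧸ I) * moduleLength R (R ⧸ bracketPow R (maximalIdeal R) (p ^ n)) := by
  rcases eq_or_ne (moduleLength R (R ⧸ I)) ⊤ with hℓ | hℓ
  · rw [hℓ]
    have hL1 : 1 ≤ moduleLength R (R ⧸ bracketPow R (maximalIdeal R) (p ^ n)) := by
      have hne : bracketPow R (maximalIdeal R) (p ^ n) ≠ ⊤ := by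
        intro h
        have hle : bracketPow R (maximalIdeal R) (p ^ n) ≤ maximalIdeal R := by
          rw [bracketPow, Ideal.span_le]
          rintro _ ⟨m, hm, rfl⟩
          exact Ideal.pow_mem_of_mem _ hm _ (pow_pos hp.pos n)
        exact (IsLocalRing.maximalIdeal.isMaximal R).ne_top (top_le_iff.mp (h ▸ hle))
      have hnt : Nontrivial (R ⧸ bracketPow R (maximalIdeal R) (p ^ n)) :=
        Submodule.Quotient.nontrivial_iff.mpr hne
      exact one_le_moduleLength
    have : (⊤ : ℕ∞) * moduleLength R (R ⧸ bracketPow R (maximalIdeal R) (p ^ n)) = ⊤ :=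
      ENat.top_mul (by intro h; rw [h] at hL1; simp at hL1)
    rw [this]
    exact le_top
  · obtain ⟨c, hc⟩ := WithTop.ne_top_iff_exists.mp hℓ
    rw [← hc]
    exact key_induction p hp n c I (le_of_eq hc.symm)
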